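/- Let θ > 0 and c ≥ 0. There exist constants C > 0 and h₀ ∈ (0,1], depending only on θ and c, such that for every h ∈ (0, h₀] the following holds: let p₀, p₁, p₂ ∈ ℝ³ be the vertices of a triangle τ₁ all of whose side lengths lie in [θh, h] and whose area satisfies A(τ₁) ≥ θh², and let q₀, q₁, q₂ ∈ ℝ³ be the vertices of a triangle τ₂ such that | ‖q_i − q_j‖ − ‖p_i − p_j‖ | ≤ c h³ for every pair i ≠ j. Then | A(τ₂) − A(τ₁) | ≤ C h⁴. -/

import Mathlib

/-- The cross product on `ℝ³` with the Euclidean norm. -/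
noncomputable def cross3 (u v : EuclideanSpace ℝ (Fin 3)) : EuclideanSpace ℝ (Fin 3) :=
  (WithLp.equiv 2 (Fin 3 → ℝ)).symm
    ![u 1 * v 2 - u 2 * v 1, u 2 * v 0 - u 0 * v 2, u 0 * v 1 - u 1 * v 0]

/-- Area of the triangle with vertices `p₀ p₁ p₂ ∈ ℝ³`. -/
noncomputable def triArea (p₀ p₁ p₂ : EuclideanSpace ℝ (Fin 3)) : ℝ :=
  ‖cross3 (p₁ - p₀) (p₂ - p₀)‖ / 2

lemma norm_sq_eq3 (u : EuclideanSpace ℝ (Fin 3)) : ‖u‖^2 = u 0^2 + u 1^2 + u 2^2 := by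
  rw [← real_inner_self_eq_norm_sq, PiLp.inner_apply]
  simp [Fin.sum_univ_three]

lemma inner_eq3 (u v : EuclideanSpace ℝ (Fin 3)) :
    (inner ℝ u v : ℝ) = u 0 * v 0 + u 1 * v 1 + u 2 * v 2 := by
  simp [PiLp.inner_apply, Fin.sum_univ_three]
  ring

/-- Lagrange's identity for the cross product on `ℝ³`. -/
lemma cross3_norm_sq (u v : EuclideanSpace ℝ (Fin 3)) :
    ‖cross3 u v‖^2 = ‖u‖^2 * ‖v‖^2 - (inner ℝ u v : ℝ)^2 := by
  rw [norm_sq_eq3, norm_sq_eq3, norm_sq_eq3, inner_eq3]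
  simp only [cross3, WithLp.equiv_symm_apply, PiLp.toLp_apply, Matrix.cons_val_zero, Matrix.cons_val_one,
    Matrix.head_cons, Matrix.cons_val_two, Matrix.tail_cons]
  ring

/-- Heron-type formula: the squared area in terms of the three side lengths. -/
lemma triArea_sq (p₀ p₁ p₂ : EuclideanSpace ℝ (Fin 3)) :
    triArea p₀ p₁ p₂ ^ 2 =
      (‖p₁ - p₀‖^2 * ‖p₂ - p₀‖^2
        - ((‖p₁ - p₀‖^2 + ‖p₂ - p₀‖^2 - ‖p₂ - p₁‖^2)/2)^2) / 4 := by
  have h1 : p₂ - p₁ = (p₂ - p₀) - (p₁ - p₀) := by abel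
  have h2 : ‖(p₂ - p₀) - (p₁ - p₀)‖^2
      = ‖p₂ - p₀‖^2 - 2 * (inner ℝ (p₂ - p₀) (p₁ - p₀) : ℝ) + ‖p₁ - p₀‖^2 :=
    norm_sub_sq_real _ _
  have h3 : (inner ℝ (p₁ - p₀) (p₂ - p₀) : ℝ) = (inner ℝ (p₂ - p₀) (p₁ - p₀) : ℝ) :=
    real_inner_comm _ _
  rw [triArea, div_pow, cross3_norm_sq, h1, h2, h3]
  ring

/-- Perturbation bound for the Heron polynomial in the squared side lengths. -/
lemma heron_bound (h ε X Y Z X' Y' Z' : ℝ) (hε : 0 ≤ ε)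
    (hX0 : 0 ≤ X) (hY0 : 0 ≤ Y) (hZ0 : 0 ≤ Z)
    (hX : X ≤ h^2) (hY : Y ≤ h^2) (hZ : Z ≤ h^2)
    (hX'0 : 0 ≤ X') (hY'0 : 0 ≤ Y') (hZ'0 : 0 ≤ Z')
    (hX' : X' ≤ 4*h^2) (hY' : Y' ≤ 4*h^2) (hZ' : Z' ≤ 4*h^2)
    (eX : |X' - X| ≤ ε) (eY : |Y' - Y| ≤ ε) (eZ : |Z' - Z| ≤ ε) :
    |(X'*Y' - ((X'+Y'-Z')/2)^2) - (X*Y - ((X+Y-Z)/2)^2)| ≤ 17 * h^2 * ε := by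
  have t1 : |X'*Y' - X*Y| ≤ 5 * h^2 * ε := by
    have : X'*Y' - X*Y = X'*(Y'-Y) + Y*(X'-X) := by ring
    calc |X'*Y' - X*Y| = |X'*(Y'-Y) + Y*(X'-X)| := by rw [this]
      _ ≤ |X'*(Y'-Y)| + |Y*(X'-X)| := abs_add_le _ _
      _ = X' * |Y'-Y| + Y * |X'-X| := by
          rw [abs_mul, abs_mul, abs_of_nonneg hX'0, abs_of_nonneg hY0]
      _ ≤ (4*h^2) * ε + h^2 * ε :=
          add_le_add (mul_le_mul hX' eY (abs_nonneg _) (by positivity))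
            (mul_le_mul hY eX (abs_nonneg _) (by positivity))
      _ = 5 * h^2 * ε := by ring
  have t2 : |((X'+Y'-Z')/2)^2 - ((X+Y-Z)/2)^2| ≤ 12 * h^2 * ε := by
    set S := (X+Y-Z)/2 with hS
    set S' := (X'+Y'-Z')/2 with hS'
    have hSb : |S| ≤ (3/2) * h^2 := by
      rw [abs_le]; constructor <;> simp only [hS] <;> linarith
    have hS'b : |S'| ≤ 6 * h^2 := by
      rw [abs_le]; constructor <;> simp only [hS'] <;> linarith
    have hdiff : |S' - S| ≤ (3/2) * ε := by
      have h1 := abs_le.mp eX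
      have h2 := abs_le.mp eY
      have h3 := abs_le.mp eZ
      rw [abs_le]; constructor <;> simp only [hS, hS'] <;> linarith
    have : S'^2 - S^2 = (S' - S) * (S' + S) := by ring
    calc |S'^2 - S^2| = |S' - S| * |S' + S| := by rw [this, abs_mul]
      _ ≤ ((3/2) * ε) * ((15/2) * h^2) := by
          apply mul_le_mul hdiff _ (abs_nonneg _) (by positivity)
          calc |S' + S| ≤ |S'| + |S| := abs_add_le _ _
            _ ≤ (15/2) * h^2 := by linarith
      _ ≤ 12 * h^2 * ε := by nlinarith
  calc |(X'*Y' - ((X'+Y'-Z')/2)^2) - (X*Y - ((X+Y-Z)/2)^2)|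
      = |(X'*Y' - X*Y) - (((X'+Y'-Z')/2)^2 - ((X+Y-Z)/2)^2)| := by ring_nf
    _ ≤ |X'*Y' - X*Y| + |((X'+Y'-Z')/2)^2 - ((X+Y-Z)/2)^2| := abs_sub _ _
    _ ≤ 17 * h^2 * ε := by linarith

/-- The purely arithmetic core of the supercloseness estimate. -/
lemma area_diff_arith (θ c h a b d a' b' d' A A' : ℝ)
    (hθ : 0 < θ) (hc : 0 ≤ c) (hh : 0 < h) (hch : c * h^3 ≤ h)
    (ha : 0 ≤ a) (hb : 0 ≤ b) (hd : 0 ≤ d) (hah : a ≤ h) (hbh : b ≤ h) (hdh : d ≤ h)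
    (ha' : 0 ≤ a') (hb' : 0 ≤ b') (hd' : 0 ≤ d')
    (hA : 0 ≤ A) (hA' : 0 ≤ A') (hAθ : θ * h^2 ≤ A)
    (hA2 : A^2 = (a^2 * b^2 - ((a^2 + b^2 - d^2)/2)^2) / 4)
    (hA'2 : A'^2 = (a'^2 * b'^2 - ((a'^2 + b'^2 - d'^2)/2)^2) / 4)
    (e1 : |a' - a| ≤ c * h^3) (e2 : |b' - b| ≤ c * h^3) (e3 : |d' - d| ≤ c * h^3) :
    |A' - A| ≤ (13 * c / θ) * h^4 := by
  have hch3 : 0 ≤ c * h^3 := by positivity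
  have ha'2 : a' ≤ 2*h := by have := (abs_le.mp e1).2; linarith
  have hb'2 : b' ≤ 2*h := by have := (abs_le.mp e2).2; linarith
  have hd'2 : d' ≤ 2*h := by have := (abs_le.mp e3).2; linarith
  have sq_bound : ∀ x x' : ℝ, 0 ≤ x → x ≤ h → 0 ≤ x' → x' ≤ 2*h → |x' - x| ≤ c*h^3 →
      |x'^2 - x^2| ≤ 3*c*h^4 := by
    intro x x' hx hxh hx' hx'h he
    have hid : x'^2 - x^2 = (x' - x) * (x' + x) := by ring
    rw [hid, abs_mul]
    have h1 : |x' + x| ≤ 3*h := by rw [abs_of_nonneg (by linarith)]; linarith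
    calc |x' - x| * |x' + x| ≤ (c*h^3) * (3*h) := mul_le_mul he h1 (abs_nonneg _) hch3
      _ = 3*c*h^4 := by ring
  have hX := sq_bound a a' ha hah ha' ha'2 e1
  have hY := sq_bound b b' hb hbh hb' hb'2 e2
  have hZ := sq_bound d d' hd hdh hd' hd'2 e3
  have hG : |A'^2 - A^2| ≤ 13 * c * h^6 := by
    rw [hA2, hA'2]
    have sq2 : ∀ x : ℝ, 0 ≤ x → x ≤ 2*h → x^2 ≤ 4*h^2 := by
      intro x hx hxh
      calc x^2 ≤ (2*h)^2 := pow_le_pow_left₀ hx hxh 2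
        _ = 4*h^2 := by ring
    have key := heron_bound h (3*c*h^4) (a^2) (b^2) (d^2) (a'^2) (b'^2) (d'^2)
      (by positivity) (sq_nonneg a) (sq_nonneg b) (sq_nonneg d)
      (pow_le_pow_left₀ ha hah 2) (pow_le_pow_left₀ hb hbh 2) (pow_le_pow_left₀ hd hdh 2)
      (sq_nonneg a') (sq_nonneg b') (sq_nonneg d')
      (sq2 a' ha' ha'2) (sq2 b' hb' hb'2) (sq2 d' hd' hd'2)
      hX hY hZ
    have hdiv : (a'^2 * b'^2 - ((a'^2 + b'^2 - d'^2)/2)^2) / 4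
        - (a^2 * b^2 - ((a^2 + b^2 - d^2)/2)^2) / 4
        = ((a'^2 * b'^2 - ((a'^2+b'^2-d'^2)/2)^2) - (a^2 * b^2 - ((a^2+b^2-d^2)/2)^2)) / 4 := by
      ring
    rw [hdiv, abs_div, abs_of_nonneg (by norm_num : (0:ℝ) ≤ 4)]
    have h17 : 17 * h^2 * (3*c*h^4) = 51 * c * h^6 := by ring
    rw [h17] at key
    have h52 : 51 * c * h^6 / 4 ≤ 13 * c * h^6 := by
      have : 0 ≤ c * h^6 := by positivity
      linarith
    linarith [key, h52, abs_nonneg ((a'^2 * b'^2 - ((a'^2+b'^2-d'^2)/2)^2) - (a^2 * b^2 - ((a^2+b^2-d^2)/2)^2))]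
  have hsum : θ * h^2 ≤ A' + A := by linarith
  have hfac : |A' - A| * (θ * h^2) ≤ 13 * c * h^6 := by
    have hmul : |A' - A| * (A' + A) = |A'^2 - A^2| := by
      rw [← abs_of_nonneg (show 0 ≤ A' + A by linarith), ← abs_mul]
      congr 1; ring
    calc |A' - A| * (θ * h^2) ≤ |A' - A| * (A' + A) :=
          mul_le_mul_of_nonneg_left hsum (abs_nonneg _)
      _ = |A'^2 - A^2| := hmul
      _ ≤ 13 * c * h^6 := hG
  have hpos : 0 < θ * h^2 := by positivity
  rw [← le_div_iff₀ hpos] at hfac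
  calc |A' - A| ≤ 13 * c * h^6 / (θ * h^2) := hfac
    _ = (13 * c / θ) * h^4 := by field_simp

/-- Lemma 3.5, first estimate: supercloseness of triangle areas. -/
theorem triangle_area_supercloseness
    (θ c : ℝ) (hθ : 0 < θ) (hc : 0 ≤ c) :
    ∃ C > (0 : ℝ), ∃ h₀ > (0 : ℝ), h₀ ≤ 1 ∧
      ∀ h : ℝ, 0 < h → h ≤ h₀ →
        ∀ p₀ p₁ p₂ q₀ q₁ q₂ : EuclideanSpace ℝ (Fin 3),
          θ * h ≤ ‖p₁ - p₀‖ → ‖p₁ - p₀‖ ≤ h →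
          θ * h ≤ ‖p₂ - p₀‖ → ‖p₂ - p₀‖ ≤ h →
          θ * h ≤ ‖p₂ - p₁‖ → ‖p₂ - p₁‖ ≤ h →
          θ * h ^ 2 ≤ triArea p₀ p₁ p₂ →
          |‖q₁ - q₀‖ - ‖p₁ - p₀‖| ≤ c * h ^ 3 →
          |‖q₂ - q₀‖ - ‖p₂ - p₀‖| ≤ c * h ^ 3 →
          |‖q₂ - q₁‖ - ‖p₂ - p₁‖| ≤ c * h ^ 3 →
          |triArea q₀ q₁ q₂ - triArea p₀ p₁ p₂| ≤ C * h ^ 4 := by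
  refine ⟨13 * c / θ + 1, by positivity, min 1 (1/(c+1)), ?_, min_le_left _ _, ?_⟩
  · exact lt_min one_pos (by positivity)
  intro h hh hh0 p₀ p₁ p₂ q₀ q₁ q₂ h1 h2 h3 h4 h5 h6 hA e1 e2 e3
  have hh1 : h ≤ 1 := hh0.trans (min_le_left _ _)
  have hhc : h ≤ 1/(c+1) := hh0.trans (min_le_right _ _)
  have hch : c * h^3 ≤ h := by
    have hc1 : 0 < c + 1 := by linarith
    have : c * h ≤ 1 := by
      calc c * h ≤ (c+1) * (1/(c+1)) := by
            apply mul_le_mul (by linarith) hhc hh.le hc1.le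
        _ = 1 := by field_simp
    nlinarith [sq_nonneg h, hh.le]
  have key := area_diff_arith θ c h ‖p₁ - p₀‖ ‖p₂ - p₀‖ ‖p₂ - p₁‖
    ‖q₁ - q₀‖ ‖q₂ - q₀‖ ‖q₂ - q₁‖ (triArea p₀ p₁ p₂) (triArea q₀ q₁ q₂)
    hθ hc hh hch (norm_nonneg _) (norm_nonneg _) (norm_nonneg _) h2 h4 h6
    (norm_nonneg _) (norm_nonneg _) (norm_nonneg _)
    (by unfold triArea; positivity) (by unfold triArea; positivity) hA
    (triArea_sq p₀ p₁ p₂) (triArea_sq q₀ q₁ q₂) e1 e2 e3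
  have hh4 : 0 < h^4 := by positivity
  calc |triArea q₀ q₁ q₂ - triArea p₀ p₁ p₂| ≤ (13 * c / θ) * h^4 := key
    _ ≤ (13 * c / θ + 1) * h^4 := by nlinarith
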